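/- For k < n/2, the reflection map sending a north-east path p from (0,0) to (k, n-k) to the path obtained by reflecting the portion of p after its last intersection with the line y = x + n - 2k - 1 is a well-defined injection into paths from (0,0) to (k+1, n-k-1), which moreover preserves the number of diagonal steps when applied to paths with steps N, E, D (reflection swapping N and E steps and fixing D steps). -/

import Mathlib

/-- A lattice path with steps `N = (0,1)`, `E = (1,0)` and the diagonal step `D = (1,1)`. -/
def IsNEDPath (p : List (ℤ × ℤ)) : Prop :=
  ∀ s ∈ p, s = (0, 1) ∨ s = (1, 0) ∨ s = (1, 1)

/-- Reflect, in the line `y = x + c`, the portion of the path `p` after its last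
intersection with that line: steps before the last intersection are kept, and the
later steps have their coordinates swapped (reflection swaps `N` and `E`, fixes `D`). -/
def reflectAfter (c : ℤ) (p : List (ℤ × ℤ)) : List (ℤ × ℤ) :=
  let t := Nat.findGreatest (fun m => (p.take m).sum.2 = (p.take m).sum.1 + c) p.length
  p.take t ++ (p.drop t).map (fun s => (s.2, s.1))

namespace ReflAux

/-- swap as used in reflectAfter -/
def sw : ℤ × ℤ → ℤ × ℤ := fun s => (s.2, s.1)

lemma sw_inj : Function.Injective sw := by
  intro a b h
  simp [sw, Prod.ext_iff] at h ⊢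
  exact ⟨h.2, h.1⟩

lemma sum_map_sw (l : List (ℤ × ℤ)) : (l.map sw).sum = ((l.sum.2, l.sum.1) : ℤ × ℤ) := by
  induction l with
  | nil => simp; rfl
  | cons a l ih => simp [sw, ih, Prod.ext_iff]

/-- height above the diagonal after `m` steps -/
def d (p : List (ℤ × ℤ)) (m : ℕ) : ℤ := (p.take m).sum.2 - (p.take m).sum.1

lemma d_step (p : List (ℤ × ℤ)) (hp : IsNEDPath p) (i : ℕ) : d p (i + 1) ≤ d p i + 1 := by
  by_cases h : i < p.length
  · have : p.take (i + 1) = p.take i ++ [p[i]] := by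
      rw [List.take_succ, List.getElem?_eq_getElem h]
      rfl
    have hs := hp p[i] (List.getElem_mem h)
    simp only [d, this, List.sum_append, List.sum_cons, List.sum_nil, add_zero]
    rcases hs with h' | h' | h' <;> simp [h', Prod.fst_add, Prod.snd_add] <;> omega
  · have : p.take (i + 1) = p.take i := by
      rw [List.take_of_length_le (by omega), List.take_of_length_le (by omega)]
    simp [d, this]

/-- discrete intermediate value theorem (upward crossing) -/
lemma ivt (p : List (ℤ × ℤ)) (hp : IsNEDPath p) (c : ℤ) {a b : ℕ} (hab : a ≤ b)
    (ha : d p a ≤ c) (hb : c ≤ d p b) : ∃ m, a ≤ m ∧ m ≤ b ∧ d p m = c := by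
  induction b with
  | zero =>
    have : a = 0 := Nat.le_zero.mp hab
    subst this
    exact ⟨0, le_refl _, le_refl _, le_antisymm ha hb⟩
  | succ b ih =>
    rcases Nat.lt_or_ge a (b + 1) with h | h
    · rcases le_or_gt c (d p b) with h2 | h2
      · obtain ⟨m, h1, h2', h3⟩ := ih (Nat.lt_succ_iff.mp h) h2
        exact ⟨m, h1, h2'.trans (Nat.le_succ b), h3⟩
      · refine ⟨b + 1, le_of_lt h, le_refl _, le_antisymm ?_ hb⟩
        have := d_step p hp b
        omega
    · have ha' : a = b + 1 := le_antisymm hab h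
      exact ⟨b + 1, le_of_eq ha', le_refl _, le_antisymm (ha' ▸ ha) hb⟩

lemma count_map_sw (l : List (ℤ × ℤ)) :
    (l.map sw).count ((1 : ℤ), (1 : ℤ)) = l.count ((1 : ℤ), (1 : ℤ)) := by
  induction l with
  | nil => rfl
  | cons a l ih =>
    rw [List.map_cons, List.count_cons, List.count_cons, ih]
    by_cases h : a = ((1 : ℤ), (1 : ℤ))
    · subst h; rfl
    · have h2 : sw a ≠ ((1 : ℤ), (1 : ℤ)) := by
        intro hc
        apply h
        apply sw_inj
        rw [hc]
        rfl
      have h1' : a ≠ (1 : ℤ × ℤ) := h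
      have h2' : sw a ≠ (1 : ℤ × ℤ) := h2
      simp [h, h2]

/-- The key lemma: all properties of `reflectAfter` for a single path. -/
lemma key (c : ℤ) (hc : 0 ≤ c) (p : List (ℤ × ℤ)) (hp : IsNEDPath p)
    (hsum : p.sum.2 = p.sum.1 + c + 1) :
    IsNEDPath (reflectAfter c p) ∧
    (reflectAfter c p).sum = (p.sum.2 - c, p.sum.1 + c) ∧
    (reflectAfter c p).count (1, 1) = p.count (1, 1) ∧
    reflectAfter c (reflectAfter c p) = p := by
  classical
  set P : ℕ → Prop := fun m => (p.take m).sum.2 = (p.take m).sum.1 + c with hP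
  set t : ℕ := Nat.findGreatest P p.length with htdef
  have ht_le : t ≤ p.length := Nat.findGreatest_le _
  -- d p 0 = 0 and d p (length) = c + 1
  have hd0 : d p 0 = 0 := by simp [d]
  have hdlen : d p p.length = c + 1 := by simp [d, List.take_of_length_le (le_refl _)]; omega
  -- existence of an intersection
  obtain ⟨m₀, -, hm₀le, hm₀⟩ :=
    ivt p hp c (a := 0) (b := p.length) (Nat.zero_le _) (by omega) (by omega)
  have hPm₀ : P m₀ := by simp only [hP]; simp only [d] at hm₀; omega
  have hPt : P t := Nat.findGreatest_spec hm₀le hPm₀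
  have hdt : d p t = c := by simp only [hP] at hPt; simp only [d]; omega
  -- after t, strictly above the line
  have hgt : ∀ m, t < m → m ≤ p.length → c < d p m := by
    intro m h1 h2
    by_contra hcon
    push_neg at hcon
    obtain ⟨m', hm'1, hm'2, hm'3⟩ := ivt p hp c (b := p.length) h2 hcon (by omega)
    have : ¬ P m' := Nat.findGreatest_is_greatest (lt_of_lt_of_le h1 hm'1) hm'2
    apply this
    simp only [hP]; simp only [d] at hm'3; omega
  -- notation for q
  have hq : reflectAfter c p = p.take t ++ (p.drop t).map sw := rfl
  set q : List (ℤ × ℤ) := p.take t ++ (p.drop t).map sw with hqdef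
  have hlen_take : (p.take t).length = t := by simp [ht_le]
  have hq_len : q.length = p.length := by
    simp only [hqdef, List.length_append, List.length_map, List.length_take, List.length_drop]
    omega
  -- NED
  have hNED : IsNEDPath q := by
    intro s hs
    rcases List.mem_append.mp hs with h' | h'
    · exact hp s (List.mem_of_mem_take h')
    · obtain ⟨s', hs', rfl⟩ := List.mem_map.mp h'
      rcases hp s' (List.mem_of_mem_drop hs') with h'' | h'' | h'' <;> simp [sw, h'']
  -- sum
  have hA : (p.take t).sum + (p.drop t).sum = p.sum := by
    rw [← List.sum_append, List.take_append_drop]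
  have hAc : (p.take t).sum.2 = (p.take t).sum.1 + c := hPt
  have hA1 : (p.take t).sum.1 + (p.drop t).sum.1 = p.sum.1 := by
    rw [← Prod.fst_add, hA]
  have hA2 : (p.take t).sum.2 + (p.drop t).sum.2 = p.sum.2 := by
    rw [← Prod.snd_add, hA]
  have hq_sum : q.sum = (p.sum.2 - c, p.sum.1 + c) := by
    rw [hqdef, List.sum_append, sum_map_sw, Prod.ext_iff]
    refine ⟨?_, ?_⟩ <;> simp only [Prod.fst_add, Prod.snd_add] <;> omega
  -- count
  have hcount : q.count (1, 1) = p.count (1, 1) := by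
    rw [hqdef, List.count_append, count_map_sw, ← List.count_append, List.take_append_drop]
  -- involution
  have hq_take : q.take t = p.take t := by
    rw [hqdef, List.take_left' hlen_take]
  have hq_drop : q.drop t = (p.drop t).map sw := by
    rw [hqdef, List.drop_left' hlen_take]
  -- the predicate for q
  set Q : ℕ → Prop := fun m => (q.take m).sum.2 = (q.take m).sum.1 + c with hQ
  have hQt : Q t := by
    simp only [hQ, hq_take]; exact hPt
  have hQgt : ∀ m, t < m → m ≤ p.length → ¬ Q m := by
    intro m h1 h2
    have hsplit : p.take m = p.take t ++ (p.drop t).take (m - t) := by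
      rw [← List.take_add]
      congr 1
      omega
    have hqsplit : q.take m = p.take t ++ ((p.drop t).take (m - t)).map sw := by
      have : q.take m = q.take t ++ (q.drop t).take (m - t) := by
        rw [← List.take_add]; congr 1; omega
      rw [this, hq_take, hq_drop, List.map_take]
    have hdm := hgt m h1 h2
    simp only [d, hsplit, List.sum_append, Prod.fst_add, Prod.snd_add] at hdm
    simp only [hQ, hqsplit, List.sum_append, sum_map_sw, Prod.fst_add, Prod.snd_add]
    intro hcon
    omega
  have htq : Nat.findGreatest Q q.length = t := by
    rw [hq_len]
    have h1 : t ≤ Nat.findGreatest Q p.length := Nat.le_findGreatest ht_le hQt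
    rcases Nat.lt_or_ge t (Nat.findGreatest Q p.length) with h2 | h2
    · exfalso
      exact hQgt _ h2 (Nat.findGreatest_le _) (Nat.findGreatest_spec ht_le hQt)
    · omega
  have hinv : reflectAfter c q = p := by
    show q.take (Nat.findGreatest Q q.length) ++ (q.drop (Nat.findGreatest Q q.length)).map sw = p
    rw [htq, hq_take, hq_drop, List.map_map]
    have : sw ∘ sw = id := by funext s; rfl
    rw [this, List.map_id, List.take_append_drop]
  exact ⟨hNED, hq_sum, hcount, hinv⟩

end ReflAux

/-- For `k < n/2`, reflection in the line `y = x + (n - 2k - 1)` after the last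
intersection is a well-defined injection from NED-paths from the origin to `(k, n-k)`
to NED-paths from the origin to `(k+1, n-k-1)`, preserving the number of diagonal
steps. -/
theorem reflection_principle (n k : ℕ) (h : 2 * k < n) :
    (∀ p : List (ℤ × ℤ), IsNEDPath p → p.sum = ((k : ℤ), (n : ℤ) - k) →
      IsNEDPath (reflectAfter ((n : ℤ) - 2 * k - 1) p) ∧
      (reflectAfter ((n : ℤ) - 2 * k - 1) p).sum = ((k : ℤ) + 1, (n : ℤ) - k - 1) ∧
      (reflectAfter ((n : ℤ) - 2 * k - 1) p).count (1, 1) = p.count (1, 1)) ∧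
    Set.InjOn (reflectAfter ((n : ℤ) - 2 * k - 1))
      {p : List (ℤ × ℤ) | IsNEDPath p ∧ p.sum = ((k : ℤ), (n : ℤ) - k)} := by
  have hc : (0 : ℤ) ≤ (n : ℤ) - 2 * k - 1 := by
    have : (2 * k : ℤ) < n := by exact_mod_cast h
    omega
  constructor
  · intro p hp hsum
    have hs2 : p.sum.2 = p.sum.1 + ((n : ℤ) - 2 * k - 1) + 1 := by
      rw [hsum]; ring
    obtain ⟨h1, h2, h3, -⟩ := ReflAux.key _ hc p hp hs2
    refine ⟨h1, ?_, h3⟩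
    rw [h2, hsum]
    ext <;> simp <;> ring
  · intro p1 hp1 p2 hp2 heq
    have hs1 : p1.sum.2 = p1.sum.1 + ((n : ℤ) - 2 * k - 1) + 1 := by
      rw [hp1.2]; ring
    have hs2 : p2.sum.2 = p2.sum.1 + ((n : ℤ) - 2 * k - 1) + 1 := by
      rw [hp2.2]; ring
    obtain ⟨-, -, -, hi1⟩ := ReflAux.key _ hc p1 hp1.1 hs1
    obtain ⟨-, -, -, hi2⟩ := ReflAux.key _ hc p2 hp2.1 hs2
    rw [← hi1, ← hi2, heq]
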